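/- Let (V, I) be an interval system. If π is a completely join-irreducible element of D(V, I), then π* (the join of all decompositions strictly below π) is a strong decomposition, i.e., all its blocks are strong sets of (V, I). -/
import Mathlib


variable {V : Type*}

/-- `Q` is a closure system on `V`: it contains `V` and is closed under
intersections of nonempty subfamilies. -/
def IsClosureSystem (Q : Set (Set V)) : Prop :=
  Set.univ ∈ Q ∧ ∀ F ⊆ Q, F.Nonempty → ⋂₀ F ∈ Q

/-- Algebraic: the union of any nonempty chain of closed sets is closed. -/
def IsAlgebraicSystem (Q : Set (Set V)) : Prop :=
  ∀ C ⊆ Q, C.Nonempty → IsChain (· ⊆ ·) C → ⋃₀ C ∈ Q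

/-- Condition (I₀): the empty set and all singletons are closed. -/
def CondI0 (Q : Set (Set V)) : Prop := ∅ ∈ Q ∧ ∀ x : V, {x} ∈ Q

/-- Condition (I₁): the union of two intersecting members is a member. -/
def CondI1 (Q : Set (Set V)) : Prop :=
  ∀ A ∈ Q, ∀ B ∈ Q, (A ∩ B).Nonempty → A ∪ B ∈ Q

/-- Condition (I₂): differences of properly overlapping members are members. -/
def CondI2 (Q : Set (Set V)) : Prop :=
  ∀ A ∈ Q, ∀ B ∈ Q, (A ∩ B).Nonempty → ¬ A ⊆ B → ¬ B ⊆ A → A \ B ∈ Q ∧ B \ A ∈ Q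

/-- An interval system: an algebraic closure system satisfying (I₀), (I₁), (I₂). -/
def IsIntervalSystem (Q : Set (Set V)) : Prop :=
  IsClosureSystem Q ∧ IsAlgebraicSystem Q ∧ CondI0 Q ∧ CondI1 Q ∧ CondI2 Q

/-- `A` is a strong set of the closure system `Q`. -/
def IsStrong (Q : Set (Set V)) (A : Set V) : Prop :=
  A ∈ Q ∧ ∀ B ∈ Q, (A ∩ B).Nonempty → A ⊆ B ∨ B ⊆ A

/-- A decomposition: a partition of `V` (coded as a setoid) all of whose
blocks belong to `Q`.  The refinement order on partitions corresponds to the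
order on `Setoid V` (finer below). -/
def IsDecomp (Q : Set (Set V)) (π : Setoid V) : Prop :=
  ∀ x : V, {y | π.r x y} ∈ Q

/-- The lattice `D(V,Q)` of decompositions, as a subtype of `Setoid V`
with the induced (refinement) partial order. -/
abbrev Decomp (Q : Set (Set V)) := {π : Setoid V // IsDecomp Q π}

/-- `π_A`: the partition with block `A` and all other blocks singletons. -/
def piA (A : Set V) : Setoid V :=
  ⟨fun a b => a = b ∨ (a ∈ A ∧ b ∈ A), by
    constructor
    · intro a; exact Or.inl rfl
    · intro a b h; aesop
    · intro a b c h1 h2; aesop⟩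

/-- A decomposition of `A` in the restricted closure system `(A, Q_A)`,
`Q_A = {C ∩ A | C ∈ Q}`: a partition of `A` all of whose blocks are of the
form `C ∩ A` with `C ∈ Q`. -/
def IsRestDecomp (Q : Set (Set V)) (A : Set V) (μ : Setoid ↥A) : Prop :=
  ∀ x : ↥A, ∃ C ∈ Q, Subtype.val '' {y | μ.r x y} = C ∩ A

/-- `μ` is a greatest proper decomposition of `A` in `(A, Q_A)`: it is proper
(different from `{A}`, i.e. `μ ≠ ⊤`) and every proper decomposition of `A`
refines it. -/
def IsGreatestProperDecomp (Q : Set (Set V)) (A : Set V) (μ : Setoid ↥A) : Prop :=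
  IsRestDecomp Q A μ ∧ μ ≠ ⊤ ∧
    ∀ ν : Setoid ↥A, IsRestDecomp Q A ν → ν ≠ ⊤ → ν ≤ μ

/-- `π` is completely join-irreducible in the lattice `D(V,Q)`: it is not the
least decomposition `Δ` and whenever it is the join (least upper bound within
`D(V,Q)`) of a family of decompositions, it is one of them. -/
def IsCJI (Q : Set (Set V)) (π : Decomp Q) : Prop :=
  π.1 ≠ ⊥ ∧ ∀ S : Set (Decomp Q), IsLUB S π → π ∈ S

/-- If `π` is completely join-irreducible in `D(V,I)`, then
`π* = ⋁{σ ∈ D(V,I) | σ < π}` (join taken in `D(V,I)`) is a strong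
decomposition: all of its blocks are strong sets of `(V,I)`. -/
theorem stmt13 (I : Set (Set V)) (hI : IsIntervalSystem I)
    (π : Decomp I) (hπ : IsCJI I π)
    (τ : Decomp I) (hτ : IsLUB {σ : Decomp I | σ < π} τ) :
    ∀ x : V, IsStrong I {y | τ.1.r x y} := by
  obtain ⟨hclos, halg, hI0, hI1, hI2⟩ := hI
  intro x
  have hτπ : τ ≤ π := hτ.2 (fun σ hσ => le_of_lt hσ)
  have hτne : τ ≠ π := by
    intro h
    have h2 : IsLUB {σ : Decomp I | σ < π} π := h ▸ hτ
    have h3 : π < π := hπ.2 _ h2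
    exact lt_irrefl π h3
  have hlow : ∀ σ : Decomp I, σ < π → σ ≤ τ := fun σ h => hτ.1 h
  set A : Set V := {y | τ.1.r x y} with hA
  set P : Set V := {y | π.1.r x y} with hPdef
  have hAI : A ∈ I := τ.2 x
  have hP : P ∈ I := π.2 x
  have hτle : τ.1 ≤ π.1 := hτπ
  have hAP : A ⊆ P := fun y hy => hτle hy
  refine ⟨hAI, ?_⟩
  intro B hB hAB
  by_contra hcon
  push_neg at hcon
  obtain ⟨hAB1, hBA⟩ := hcon
  obtain ⟨c, hcA, hcB⟩ := hAB
  obtain ⟨a0, ha0A, ha0B⟩ := Set.not_subset.mp hAB1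
  -- membership in P via π, membership in A via τ
  have hmemA : ∀ {a : V}, a ∈ A ↔ τ.1.r x a := Iff.rfl
  have hmemP : ∀ {a : V}, a ∈ P ↔ π.1.r x a := Iff.rfl
  by_cases hPA : P ⊆ A
  · -- Case A = P : split π's block A by B
    have hABI : A ∩ B ∈ I := by
      have := hclos.2 {A, B} (by intro s hs; rcases hs with rfl | rfl; exacts [hAI, hB])
        ⟨A, Or.inl rfl⟩
      simpa [Set.sInter_pair] using this
    have hAdB : A \ B ∈ I := (hI2 A hAI B hB ⟨c, hcA, hcB⟩ hAB1 hBA).1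
    -- the split setoid
    have hblk : ∀ {a b : V}, π.1.r a b → (a ∈ A ↔ b ∈ A) := by
      intro a b hab
      constructor
      · intro ha; exact hPA (hmemP.mpr (π.1.trans' (hmemP.mp (hAP ha)) hab))
      · intro hb; exact hPA (hmemP.mpr (π.1.trans' (hmemP.mp (hAP hb)) (π.1.symm' hab)))
    let σs : Setoid V :=
      ⟨fun a b => π.1.r a b ∧ (a ∈ A → (a ∈ B ↔ b ∈ B)), by
        refine ⟨fun a => ⟨π.1.refl' a, fun _ => Iff.rfl⟩, ?_, ?_⟩
        · rintro a b ⟨h1, h2⟩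
          refine ⟨π.1.symm' h1, fun hb => ?_⟩
          exact ((h2 ((hblk h1).mpr hb))).symm
        · rintro a b c ⟨h1, h2⟩ ⟨h3, h4⟩
          exact ⟨π.1.trans' h1 h3, fun ha => (h2 ha).trans (h4 ((hblk h1).mp ha))⟩⟩
    have hσdec : IsDecomp I σs := by
      intro a
      by_cases haA : a ∈ A
      · have haP : π.1.r x a := hmemP.mp (hAP haA)
        by_cases haB : a ∈ B
        · have : {y | σs.r a y} = A ∩ B := by
            ext b
            constructor
            · rintro ⟨h1, h2⟩
              exact ⟨(hblk h1).mp haA, (h2 haA).mp haB⟩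
            · rintro ⟨hbA, hbB⟩
              exact ⟨π.1.trans' (π.1.symm' haP) (hmemP.mp (hAP hbA)),
                fun _ => ⟨fun _ => hbB, fun _ => haB⟩⟩
          rw [this]; exact hABI
        · have : {y | σs.r a y} = A \ B := by
            ext b
            constructor
            · rintro ⟨h1, h2⟩
              exact ⟨(hblk h1).mp haA, fun hbB => haB ((h2 haA).mpr hbB)⟩
            · rintro ⟨hbA, hbB⟩
              exact ⟨π.1.trans' (π.1.symm' haP) (hmemP.mp (hAP hbA)),
                fun _ => ⟨fun h => absurd h haB, fun h => absurd h hbB⟩⟩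
          rw [this]; exact hAdB
      · have : {y | σs.r a y} = {y | π.1.r a y} := by
          ext b
          exact ⟨fun h => h.1, fun h => ⟨h, fun ha => absurd ha haA⟩⟩
        rw [this]; exact π.2 a
    have hσlt : (⟨σs, hσdec⟩ : Decomp I) < π := by
      refine lt_of_le_of_ne (fun a b h => h.1) ?_
      intro h
      have hπac : π.1.r a0 c :=
        π.1.trans' (π.1.symm' (hmemP.mp (hAP ha0A))) (hmemP.mp (hAP hcA))
      have heq' : σs = π.1 := congrArg Subtype.val h
      have : σs.r a0 c := by rw [← heq'] at hπac; exact hπac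
      exact ha0B ((this.2 ha0A).mpr hcB)
    have hσle : (⟨σs, hσdec⟩ : Decomp I) ≤ τ := hlow _ hσlt
    have hπleτ : π.1 ≤ τ.1 := by
      intro a b hab
      by_cases haA : a ∈ A
      · have hbA : b ∈ A := (hblk hab).mp haA
        exact τ.1.trans' (τ.1.symm' (hmemA.mp haA)) (hmemA.mp hbA)
      · exact hσle ⟨hab, fun h => absurd h haA⟩
    exact hτne (le_antisymm hτπ hπleτ)
  · -- Case A ⊊ P
    obtain ⟨p, hpP, hpA⟩ := Set.not_subset.mp hPA
    have hcP : c ∈ P := hAP hcA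
    -- construct B' ∈ I, B' ⊆ P, properly overlapping A
    obtain ⟨B', hB'I, hB'P, hneB', hnAB', hnB'A⟩ :
        ∃ B' ∈ I, B' ⊆ P ∧ (A ∩ B').Nonempty ∧ ¬ A ⊆ B' ∧ ¬ B' ⊆ A := by
      by_cases hsub : B ∩ P ⊆ A
      · have hBnP : ¬ B ⊆ P := by
          intro h
          exact hBA (fun b hb => hsub ⟨hb, h hb⟩)
        have hPnB : ¬ P ⊆ B := fun h => hAB1 (fun a ha => h (hAP ha))
        have hPBne : (P ∩ B).Nonempty := ⟨c, hcP, hcB⟩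
        have hPdB : P \ B ∈ I := (hI2 P hP B hB hPBne hPnB hBnP).1
        refine ⟨P \ B, hPdB, Set.diff_subset, ⟨a0, ha0A, hAP ha0A, ha0B⟩, ?_, ?_⟩
        · intro h
          exact (h hcA).2 hcB
        · intro h
          by_cases hpB : p ∈ B
          · exact hpA (hsub ⟨hpB, hpP⟩)
          · exact hpA (h ⟨hpP, hpB⟩)
      · have hBPI : B ∩ P ∈ I := by
          have := hclos.2 {B, P} (by intro s hs; rcases hs with rfl | rfl; exacts [hB, hP])
            ⟨B, Or.inl rfl⟩
          simpa [Set.sInter_pair] using this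
        refine ⟨B ∩ P, hBPI, Set.inter_subset_right, ⟨c, hcA, hcB, hcP⟩, ?_, hsub⟩
        intro h
        exact hAB1 (fun a ha => (h ha).1)
    obtain ⟨c', hc'A, hc'B'⟩ := hneB'
    obtain ⟨a', ha'A, ha'B'⟩ := Set.not_subset.mp hnAB'
    obtain ⟨b', hb'B', hb'A⟩ := Set.not_subset.mp hnB'A
    have hdec : IsDecomp I (piA B') := by
      intro a
      by_cases haB' : a ∈ B'
      · have : {y | (piA B').r a y} = B' := by
          ext b
          constructor
          · rintro (rfl | ⟨_, hb⟩)
            exacts [haB', hb]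
          · intro hb; exact Or.inr ⟨haB', hb⟩
        rw [this]; exact hB'I
      · have : {y | (piA B').r a y} = {a} := by
          ext b
          constructor
          · rintro (rfl | ⟨ha, _⟩)
            exacts [rfl, absurd ha haB']
          · rintro rfl; exact Or.inl rfl
        rw [this]; exact hI0.2 a
    have hle : (⟨piA B', hdec⟩ : Decomp I) ≤ π := by
      rintro a b (rfl | ⟨ha, hb⟩)
      · exact π.1.refl' a
      · exact π.1.trans' (π.1.symm' (hmemP.mp (hB'P ha))) (hmemP.mp (hB'P hb))
    by_cases heq : (⟨piA B', hdec⟩ : Decomp I) = π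
    · have hπac : π.1.r a' c' :=
        τ.1.trans' (τ.1.symm' (hmemA.mp ha'A)) (hmemA.mp hc'A) |> hτle
      have heq' : piA B' = π.1 := congrArg Subtype.val heq
      have : (piA B').r a' c' := by rw [← heq'] at hπac; exact hπac
      rcases this with rfl | ⟨h, _⟩
      · exact ha'B' hc'B'
      · exact ha'B' h
    · have hlt : (⟨piA B', hdec⟩ : Decomp I) < π := lt_of_le_of_ne hle heq
      have hle2 : (⟨piA B', hdec⟩ : Decomp I) ≤ τ := hlow _ hlt
      have : τ.1.r c' b' := hle2 (Or.inr ⟨hc'B', hb'B'⟩)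
      exact hb'A (τ.1.trans' (hmemA.mp hc'A) this)
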